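/- Positive-semidefinite lower bound on the sample Gram matrix of a backward switched recursion: let s be a finite set of natural numbers, A : ℕ → Matrix (Fin n) (Fin n) ℝ, and x, v : ℕ → (Fin n → ℝ) satisfy x t = (A t).mulVec (x (t+1)) + v t for every t ∈ s. Define the outer product (a ⊗ b) i j = a i * b j for vectors a, b : Fin n → ℝ. Then the matrix (∑_{t ∈ s} x t ⊗ x t) - (∑_{t ∈ s} v t ⊗ v t) - ∑_{t ∈ s} (A t * (x (t+1) ⊗ v t) + (A t * (x (t+1) ⊗ v t))ᵀ) is positive semidefinite. -/

import Mathlib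

open Matrix

lemma vmv_self_psd (n : ℕ) (a : Fin n → ℝ) :
    (vecMulVec a a).PosSemidef := by
  refine Matrix.posSemidef_iff_dotProduct_mulVec.mpr ⟨?_, ?_⟩
  · ext i j
    simp [Matrix.conjTranspose_apply, vecMulVec_apply, mul_comm]
  · intro y
    have h : star y ⬝ᵥ (vecMulVec a a).mulVec y
        = (∑ i, a i * y i) * (∑ i, a i * y i) := by
      simp only [dotProduct, Matrix.mulVec, Matrix.vecMulVec_apply, Finset.sum_mul,
        Finset.mul_sum, star_trivial, dotProduct]
      exact Finset.sum_congr rfl fun i _ => Finset.sum_congr rfl fun j _ => by ring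
    rw [h]
    exact mul_self_nonneg _

lemma vmv_mulVec_left (n : ℕ) (M : Matrix (Fin n) (Fin n) ℝ) (u c : Fin n → ℝ) :
    vecMulVec (M.mulVec u) c = M * vecMulVec u c := by
  ext i j
  simp only [vecMulVec_apply, Matrix.mul_apply, Matrix.mulVec, dotProduct,
    Finset.sum_mul]
  exact Finset.sum_congr rfl fun k _ => by ring

lemma vmv_mulVec_right (n : ℕ) (M : Matrix (Fin n) (Fin n) ℝ) (u c : Fin n → ℝ) :
    vecMulVec c (M.mulVec u) = vecMulVec c u * Mᵀ := by
  ext i j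
  simp only [vecMulVec_apply, Matrix.mul_apply, Matrix.mulVec, dotProduct,
    Matrix.transpose_apply, Finset.mul_sum]
  exact Finset.sum_congr rfl fun k _ => by ring

lemma vmv_add_left (n : ℕ) (a b c : Fin n → ℝ) :
    vecMulVec (a + b) c = vecMulVec a c + vecMulVec b c := by
  ext i j; simp [vecMulVec_apply, add_mul]

lemma vmv_add_right (n : ℕ) (a b c : Fin n → ℝ) :
    vecMulVec c (a + b) = vecMulVec c a + vecMulVec c b := by
  ext i j; simp [vecMulVec_apply, mul_add]

lemma vmv_transpose (n : ℕ) (a b : Fin n → ℝ) :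
    (vecMulVec a b)ᵀ = vecMulVec b a := by
  ext i j; simp [vecMulVec_apply, mul_comm]

/-- Positive-semidefinite lower bound on the sample Gram matrix of a
backward switched recursion. -/
theorem gram_matrix_psd_lower_bound (n : ℕ) (s : Finset ℕ)
    (A : ℕ → Matrix (Fin n) (Fin n) ℝ) (x v : ℕ → Fin n → ℝ)
    (hx : ∀ t ∈ s, x t = (A t).mulVec (x (t + 1)) + v t)
    (outer : (Fin n → ℝ) → (Fin n → ℝ) → Matrix (Fin n) (Fin n) ℝ)
    (houter : ∀ a b i j, outer a b i j = a i * b j) :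
    ((∑ t ∈ s, outer (x t) (x t)) - (∑ t ∈ s, outer (v t) (v t)) -
        ∑ t ∈ s, (A t * outer (x (t + 1)) (v t) +
          (A t * outer (x (t + 1)) (v t))ᵀ)).PosSemidef := by
  have houter' : outer = fun a b => vecMulVec a b := by
    funext a b; ext i j; rw [houter, vecMulVec_apply]
  subst houter'
  have key : ((∑ t ∈ s, vecMulVec (x t) (x t)) - (∑ t ∈ s, vecMulVec (v t) (v t)) -
        ∑ t ∈ s, (A t * vecMulVec (x (t + 1)) (v t) +
          (A t * vecMulVec (x (t + 1)) (v t))ᵀ))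
      = ∑ t ∈ s, A t * vecMulVec (x (t + 1)) (x (t + 1)) * (A t)ᵀ := by
    rw [← Finset.sum_sub_distrib, ← Finset.sum_sub_distrib]
    refine Finset.sum_congr rfl fun t ht => ?_
    simp only [hx t ht, vmv_add_left, vmv_add_right, vmv_mulVec_left,
      vmv_mulVec_right, Matrix.transpose_mul, vmv_transpose, add_mul, Matrix.mul_assoc]
    abel
  rw [key]
  refine Finset.sum_induction _ _ (fun a b ha hb => ha.add hb) Matrix.PosSemidef.zero
    fun t _ => ?_
  simpa using (vmv_self_psd n (x (t + 1))).mul_mul_conjTranspose_same (A t)
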